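/- Let S be a p×p symmetric positive definite matrix, and let Γ₁ be a p×u matrix and Γ₀ a p×(p−u) matrix such that [Γ₁ Γ₀] is a p×p orthogonal matrix. Then det(Γ₀ᵀ S Γ₀) = det(Γ₁ᵀ S⁻¹ Γ₁) · det(S). -/

import Mathlib

open Matrix

lemma conj_posdef {p q : ℕ} {S : Matrix (Fin p) (Fin p) ℝ} (hS : S.PosDef)
    (B : Matrix (Fin p) (Fin q) ℝ) (hB : Bᵀ * B = 1) : (Bᵀ * S * B).PosDef := by
  rw [posDef_iff_dotProduct_mulVec]
  constructor
  · have h := hS.isHermitian.eq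
    rw [Matrix.IsHermitian]
    simp only [conjTranspose_eq_transpose_of_trivial] at h ⊢
    rw [transpose_mul, transpose_mul, transpose_transpose, h, Matrix.mul_assoc]
  · intro x hx
    have hBx : B *ᵥ x ≠ 0 := by
      intro h
      apply hx
      have h2 : Bᵀ *ᵥ (B *ᵥ x) = x := by rw [mulVec_mulVec, hB, one_mulVec]
      rw [h, mulVec_zero] at h2
      exact h2.symm
    have h3 := hS.dotProduct_mulVec_pos hBx
    have key : star x ⬝ᵥ ((Bᵀ * S * B) *ᵥ x) = star (B *ᵥ x) ⬝ᵥ (S *ᵥ (B *ᵥ x)) := by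
      simp only [star_trivial, ← mulVec_mulVec]
      rw [dotProduct_mulVec, vecMul_transpose]
    rw [key]
    exact h3

theorem stmt0 (p u : ℕ) (S : Matrix (Fin p) (Fin p) ℝ)
    (Γ₁ : Matrix (Fin p) (Fin u) ℝ) (Γ₀ : Matrix (Fin p) (Fin (p - u)) ℝ)
    (hS : S.PosDef)
    (h1 : Γ₁ᵀ * Γ₁ = 1) (h0 : Γ₀ᵀ * Γ₀ = 1) (h10 : Γ₁ᵀ * Γ₀ = 0)
    (hfull : Γ₁ * Γ₁ᵀ + Γ₀ * Γ₀ᵀ = 1) :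
    (Γ₀ᵀ * S * Γ₀).det = (Γ₁ᵀ * S⁻¹ * Γ₁).det * S.det := by
  -- cardinality
  have hcard : u + (p - u) = p := by
    have h := congrArg Matrix.trace hfull
    rw [trace_add, trace_one, trace_mul_comm Γ₁, trace_mul_comm Γ₀, h1, h0, trace_one,
      trace_one] at h
    simp only [Fintype.card_fin] at h
    exact_mod_cast h
  have h01 : Γ₀ᵀ * Γ₁ = 0 := by
    have := congrArg Matrix.transpose h10
    simpa using this
  -- the orthogonal matrix G
  set G : Matrix (Fin p) (Fin u ⊕ Fin (p - u)) ℝ := fromCols Γ₁ Γ₀ with hG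
  have hGtG : Gᵀ * G = 1 := by
    rw [hG, transpose_fromCols, fromRows_mul_fromCols, h1, h0, h10, h01,
      ← fromBlocks_one]
  have hGGt : G * Gᵀ = 1 := by
    rw [hG, transpose_fromCols, fromCols_mul_fromRows, hfull]
  set A := Γ₁ᵀ * S * Γ₁ with hA
  set B := Γ₁ᵀ * S * Γ₀ with hB
  set C := Γ₀ᵀ * S * Γ₁ with hC
  set D := Γ₀ᵀ * S * Γ₀ with hD
  set A' := Γ₁ᵀ * S⁻¹ * Γ₁ with hA'
  set B' := Γ₁ᵀ * S⁻¹ * Γ₀ with hB'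
  set C' := Γ₀ᵀ * S⁻¹ * Γ₁ with hC'
  set D' := Γ₀ᵀ * S⁻¹ * Γ₀ with hD'
  have hM : Gᵀ * S * G = fromBlocks A B C D := by
    rw [hG, transpose_fromCols, fromRows_mul, fromRows_mul_fromCols, hA, hB, hC, hD]
  have hM' : Gᵀ * S⁻¹ * G = fromBlocks A' B' C' D' := by
    rw [hG, transpose_fromCols, fromRows_mul, fromRows_mul_fromCols, hA', hB', hC', hD']
  have hSdet : S.det ≠ 0 := hS.det_pos.ne'
  have hSinv : S * S⁻¹ = 1 := mul_nonsing_inv S (isUnit_iff_ne_zero.2 hSdet)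
  -- M * M' = 1
  have hMM' : fromBlocks A B C D * fromBlocks A' B' C' D' = 1 := by
    rw [← hM, ← hM']
    calc Gᵀ * S * G * (Gᵀ * S⁻¹ * G)
        = Gᵀ * (S * ((G * Gᵀ) * (S⁻¹ * G))) := by simp only [Matrix.mul_assoc]
      _ = Gᵀ * ((S * S⁻¹) * G) := by rw [hGGt, Matrix.one_mul, Matrix.mul_assoc]
      _ = Gᵀ * G := by rw [hSinv, Matrix.one_mul]
      _ = 1 := hGtG
  -- D is posdef hence invertible
  have hDpd : D.PosDef := conj_posdef hS Γ₀ h0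
  haveI : Invertible D := D.invertibleOfIsUnitDet (isUnit_iff_ne_zero.2 hDpd.det_pos.ne')
  -- determinant of the big block matrix equals det S
  let e : Fin p ≃ Fin u ⊕ Fin (p - u) := (finCongr hcard.symm).trans finSumFinEquiv.symm
  set K : Matrix (Fin p) (Fin p) ℝ := G.submatrix id e with hK
  have hKK : Kᵀ * K = 1 := by
    rw [hK, transpose_submatrix]
    have : Gᵀ.submatrix (⇑e) id * G.submatrix id (⇑e)
        = (Gᵀ * G).submatrix (⇑e) (⇑e) := by
      have := submatrix_mul_equiv Gᵀ G (⇑e) (Equiv.refl (Fin p)) (⇑e)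
      simpa using this
    rw [show (Gᵀ.submatrix (⇑e) id : Matrix (Fin p) (Fin p) ℝ)
        = Gᵀ.submatrix (⇑e) (⇑(Equiv.refl (Fin p))) from rfl] at this ⊢
    rw [this, hGtG, submatrix_one_equiv]
  have hKdet : K.det * K.det = 1 := by
    have := congrArg Matrix.det hKK
    rwa [det_mul, det_transpose, det_one] at this
  have hdetM : (fromBlocks A B C D).det = S.det := by
    rw [← hM]
    have hsub : (Gᵀ * S * G).submatrix (⇑e) (⇑e) = Kᵀ * S * K := by
      rw [hK, transpose_submatrix]
      have e1 := submatrix_mul_equiv (Gᵀ * S) G (⇑e) (Equiv.refl (Fin p)) (⇑e)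
      have e2 := submatrix_mul_equiv Gᵀ S (⇑e) (Equiv.refl (Fin p)) (⇑(Equiv.refl (Fin p)))
      simp only [Equiv.refl_apply, Equiv.coe_refl, submatrix_id_id] at e1 e2
      rw [← e1, ← e2]
    rw [← det_submatrix_equiv_self e, hsub, det_mul, det_mul, det_transpose]
    calc K.det * S.det * K.det = K.det * K.det * S.det := by ring
      _ = S.det := by rw [hKdet, one_mul]
  -- Schur complement
  have hschur := det_fromBlocks₂₂ A B C D
  have hΔ : (A - B * ⅟D * C).det ≠ 0 := by
    intro h
    rw [hschur, h, mul_zero] at hdetM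
    exact hSdet hdetM.symm
  haveI : Invertible (A - B * ⅟D * C) :=
    (A - B * ⅟D * C).invertibleOfIsUnitDet (isUnit_iff_ne_zero.2 hΔ)
  haveI : Invertible (fromBlocks A B C D) := fromBlocks₂₂Invertible A B C D
  have hinv : fromBlocks A' B' C' D' = ⅟(fromBlocks A B C D) :=
    (invOf_eq_right_inv hMM').symm
  rw [invOf_fromBlocks₂₂_eq] at hinv
  have hA'eq : A' = ⅟(A - B * ⅟D * C) := by
    have := congrArg Matrix.toBlocks₁₁ hinv
    simpa [toBlocks_fromBlocks₁₁] using this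
  have hdetA' : A'.det = ((A - B * ⅟D * C).det)⁻¹ := by
    rw [hA'eq, invOf_eq_nonsing_inv, det_nonsing_inv]
    simp [Ring.inverse_eq_inv]
  have hfinal : D.det * (A - B * ⅟D * C).det = S.det := by rw [← hschur, hdetM]
  rw [hdetA', ← hfinal, mul_comm D.det, ← mul_assoc, inv_mul_cancel₀ hΔ, one_mul]
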